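/- arXiv:2201.13117 — 4 statements merged into one kernel-verified Lean document; each statement's English description precedes it below -/
import Mathlib

section
/- Let K be a Markov (probability) kernel on ℝ^M that leaves π_k invariant, i.e. π_k.bind K = π_k. Then for every bounded measurable h : ℝ^M → ℝ, ∫∫ G(x) h(x') K(T(x), dx') dπ_{k-1}(x) = (Z_k / Z_{k-1}) ∫ h dπ_k. That is, one step of the SMC-with-normalizing-flow sampler (transport by T, importance reweighting by G, then an MCMC move by K) maps π_{k-1}-distributed weighted samples to π_k-distributed weighted samples with weight normalization Z_k / Z_{k-1}. -/
open MeasureTheory ProbabilityTheory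
open scoped ENNReal NNReal

/-- Bochner-integral version of the bind formula for bounded measurable functions. -/
lemma integral_bind_of_bounded {α : Type*} [MeasurableSpace α] [Nonempty α]
    (μ : Measure α) [IsFiniteMeasure μ]
    (K : Kernel α α) [IsMarkovKernel K] (h : α → ℝ) (hh : Measurable h) (C : ℝ)
    (hC : ∀ x, |h x| ≤ C) :
    ∫ x, h x ∂(μ.bind (fun x => K x)) = ∫ y, ∫ x, h x ∂(K y) ∂μ := by
  have hC0 : 0 ≤ C := le_trans (abs_nonneg _) (hC (Classical.arbitrary α))
  set g : α → ℝ := fun x => h x + C with hg_def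
  have hg_meas : Measurable g := hh.add measurable_const
  have hg0 : ∀ x, 0 ≤ g x := fun x => by
    have := neg_le_of_abs_le (hC x); simp only [hg_def]; linarith
  have hgC : ∀ x, g x ≤ C + C := fun x => by
    have := le_of_abs_le (hC x); simp only [hg_def]; linarith
  set ν : Measure α := μ.bind (fun x => K x) with hν_def
  have hν_univ : ν Set.univ = μ Set.univ := by
    rw [hν_def, Measure.bind_apply MeasurableSet.univ K.measurable.aemeasurable]
    simp
  have hν_fin : IsFiniteMeasure ν := ⟨by rw [hν_univ]; exact measure_lt_top μ _⟩
  -- integrability of h and g against any finite measure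
  have hint : ∀ (m : Measure α) [IsFiniteMeasure m], Integrable h m := by
    intro m _
    refine (integrable_const C).mono' hh.aestronglyMeasurable ?_
    exact Filter.Eventually.of_forall fun x => by simpa [Real.norm_eq_abs] using hC x
  have hint_g : ∀ (m : Measure α) [IsFiniteMeasure m], Integrable g m := fun m _ =>
    (hint m).add (integrable_const C)
  -- the lintegral version of the inner integral
  set F : α → ℝ≥0∞ := fun y => ∫⁻ x, ENNReal.ofReal (g x) ∂(K y) with hF_def
  have hF_meas : Measurable F := Measurable.lintegral_kernel hg_meas.ennreal_ofReal
  have hF_le : ∀ y, F y ≤ ENNReal.ofReal (C + C) := by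
    intro y
    calc F y ≤ ∫⁻ _, ENNReal.ofReal (C + C) ∂(K y) :=
          lintegral_mono fun x => ENNReal.ofReal_le_ofReal (hgC x)
      _ = ENNReal.ofReal (C + C) := by simp
  have hF_lt : ∀ y, F y < ⊤ := fun y => lt_of_le_of_lt (hF_le y) ENNReal.ofReal_lt_top
  have h_inner : ∀ y, ∫ x, g x ∂(K y) = (F y).toReal := by
    intro y
    rw [integral_eq_lintegral_of_nonneg_ae (Filter.Eventually.of_forall hg0)
      hg_meas.aestronglyMeasurable]
  -- bind formula for lintegrals
  have key : ∫⁻ x, ENNReal.ofReal (g x) ∂ν = ∫⁻ y, F y ∂μ :=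
    Measure.lintegral_bind K.measurable.aemeasurable hg_meas.ennreal_ofReal.aemeasurable
  have hg_bind : ∫ x, g x ∂ν = ∫ y, ∫ x, g x ∂(K y) ∂μ := by
    rw [integral_eq_lintegral_of_nonneg_ae (Filter.Eventually.of_forall hg0)
      hg_meas.aestronglyMeasurable, key]
    rw [← integral_toReal hF_meas.aemeasurable (Filter.Eventually.of_forall hF_lt)]
    exact integral_congr_ae (Filter.Eventually.of_forall fun y => (h_inner y).symm)
  -- integrability of the inner-integral functions
  have h_inner_g_meas : Measurable fun y => ∫ x, g x ∂(K y) := by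
    simp only [h_inner]; exact hF_meas.ennreal_toReal
  have h_inner_g_int : Integrable (fun y => ∫ x, g x ∂(K y)) μ := by
    refine (integrable_const (C + C)).mono' h_inner_g_meas.aestronglyMeasurable ?_
    refine Filter.Eventually.of_forall fun y => ?_
    rw [h_inner y, Real.norm_eq_abs, abs_of_nonneg ENNReal.toReal_nonneg]
    exact ENNReal.toReal_le_of_le_ofReal (by linarith) (hF_le y)
  have h_split : ∀ y, ∫ x, h x ∂(K y) = ∫ x, g x ∂(K y) - C := by
    intro y
    rw [hg_def]
    rw [integral_add (hint (K y)) (integrable_const C), integral_const]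
    simp [measure_univ]
  have hν_toReal : (ν Set.univ).toReal = (μ Set.univ).toReal := by rw [hν_univ]
  -- put everything together
  have lhs : ∫ x, h x ∂ν = ∫ x, g x ∂ν - C * (μ Set.univ).toReal := by
    have : ∫ x, g x ∂ν = ∫ x, h x ∂ν + (ν Set.univ).toReal * C := by
      rw [hg_def, integral_add (hint ν) (integrable_const C), integral_const, smul_eq_mul]; rfl
    rw [this, hν_toReal]; ring
  have rhs : ∫ y, ∫ x, h x ∂(K y) ∂μ
      = ∫ y, ∫ x, g x ∂(K y) ∂μ - C * (μ Set.univ).toReal := by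
    calc ∫ y, ∫ x, h x ∂(K y) ∂μ = ∫ y, (∫ x, g x ∂(K y) - C) ∂μ := by
          exact integral_congr_ae (Filter.Eventually.of_forall h_split)
      _ = ∫ y, ∫ x, g x ∂(K y) ∂μ - ∫ _, C ∂μ :=
          integral_sub h_inner_g_int (integrable_const C)
      _ = ∫ y, ∫ x, g x ∂(K y) ∂μ - C * (μ Set.univ).toReal := by
          rw [integral_const, smul_eq_mul, mul_comm]; rfl
  rw [lhs, rhs, hg_bind]

/-- One SMC-with-normalizing-flow step (transport by `T`, importance
reweighting by `G`, then an MCMC move by a `π_k`-invariant Markov kernel `K`)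
maps `π_{k-1}`-distributed weighted samples to `π_k`-distributed weighted samples
with weight normalization `Z_k / Z_{k-1}`. -/
theorem craft_smc_nf_step_correct
    (M : ℕ)
    (γkm γk : (Fin M → ℝ) → ℝ)
    (hγkm_pos : ∀ x, 0 < γkm x) (hγk_pos : ∀ x, 0 < γk x)
    (hγkm_meas : Measurable γkm) (hγk_meas : Measurable γk)
    (hγkm_int : Integrable γkm) (hγk_int : Integrable γk)
    (Zkm Zk : ℝ)
    (hZkm : Zkm = ∫ x, γkm x) (hZk : Zk = ∫ x, γk x)
    (πkm πk : Measure (Fin M → ℝ))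
    (hπkm : πkm = volume.withDensity (fun x => ENNReal.ofReal (γkm x / Zkm)))
    (hπk : πk = volume.withDensity (fun x => ENNReal.ofReal (γk x / Zk)))
    (T Tinv : (Fin M → ℝ) → (Fin M → ℝ))
    (hT : ContDiff ℝ 1 T) (hTinv : ContDiff ℝ 1 Tinv)
    (hTleft : Function.LeftInverse Tinv T)
    (hTright : Function.RightInverse Tinv T)
    (G : (Fin M → ℝ) → ℝ)
    (hG : ∀ x, G x = γk (T x) / γkm x * |(fderiv ℝ T x).det|)
    (K : Kernel (Fin M → ℝ) (Fin M → ℝ)) [IsMarkovKernel K]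
    (hKinv : πk.bind (fun x => K x) = πk)
    (h : (Fin M → ℝ) → ℝ)
    (hh_meas : Measurable h) (hh_bdd : ∃ C : ℝ, ∀ x, |h x| ≤ C) :
    ∫ x, G x * (∫ x', h x' ∂(K (T x))) ∂πkm = (Zk / Zkm) * ∫ y, h y ∂πk := by
  obtain ⟨C, hC⟩ := hh_bdd
  set f : (Fin M → ℝ) → ℝ := fun y => ∫ x', h x' ∂(K y) with hf_def
  -- positivity of normalizing constants
  have hZkm_pos : 0 < Zkm := by
    rw [hZkm, integral_pos_iff_support_of_nonneg (fun x => (hγkm_pos x).le) hγkm_int]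
    have : Function.support γkm = Set.univ :=
      Set.eq_univ_of_forall fun x => (hγkm_pos x).ne'
    rw [this]
    simp [Measure.measure_univ_pos, NeZero.ne]
  have hZk_pos : 0 < Zk := by
    rw [hZk, integral_pos_iff_support_of_nonneg (fun x => (hγk_pos x).le) hγk_int]
    have : Function.support γk = Set.univ :=
      Set.eq_univ_of_forall fun x => (hγk_pos x).ne'
    rw [this]
    simp [Measure.measure_univ_pos, NeZero.ne]
  -- πk is a finite measure
  have hπk_fin : IsFiniteMeasure πk := by
    rw [hπk]
    exact isFiniteMeasure_withDensity_ofReal (hγk_int.div_const Zk).2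
  -- withDensity integrals as weighted volume integrals
  have hwd : ∀ (d : (Fin M → ℝ) → ℝ), Measurable d → (∀ x, 0 ≤ d x) →
      ∀ (φ : (Fin M → ℝ) → ℝ),
      ∫ x, φ x ∂(volume.withDensity (fun x => ENNReal.ofReal (d x)))
        = ∫ x, d x * φ x := by
    intro d hd hd0 φ
    have : (fun x => ENNReal.ofReal (d x)) = fun x => ((Real.toNNReal (d x) : ℝ≥0) : ℝ≥0∞) :=
      rfl
    rw [this, integral_withDensity_eq_integral_smul (hd.real_toNNReal) φ]
    refine integral_congr_ae (Filter.Eventually.of_forall fun x => ?_)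
    simp [NNReal.smul_def, Real.coe_toNNReal _ (hd0 x)]
  -- change of variables
  have hdT : ∀ x, HasFDerivAt T (fderiv ℝ T x) x := fun x =>
    ((hT.differentiable one_ne_zero) x).hasFDerivAt
  have hCoV : ∀ (φ : (Fin M → ℝ) → ℝ),
      ∫ y, φ y = ∫ x, |(fderiv ℝ T x).det| * φ (T x) := by
    intro φ
    have himg : T '' Set.univ = Set.univ := by
      rw [Set.image_univ]; exact hTright.surjective.range_eq
    have := integral_image_eq_integral_abs_det_fderiv_smul volume MeasurableSet.univ
      (fun x _ => (hdT x).hasFDerivWithinAt) (hTleft.injective.injOn) φ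
    rw [himg] at this
    simpa [smul_eq_mul] using this
  -- relate ∫ f ∂πk and the invariance
  haveI := hπk_fin
  have hinv : ∫ y, f y ∂πk = ∫ y, h y ∂πk := by
    have := integral_bind_of_bounded πk K h hh_meas C hC
    rw [hKinv] at this
    exact this.symm
  -- compute ∫ f ∂πk via densities
  have hfk : ∫ y, γk y * f y = Zk * ∫ y, h y ∂πk := by
    have h1 : ∫ y, f y ∂πk = ∫ y, (γk y / Zk) * f y := by
      rw [hπk]
      exact hwd _ (hγk_meas.div_const Zk) (fun x => div_nonneg (hγk_pos x).le hZk_pos.le) f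
    have h2 : ∫ y, (γk y / Zk) * f y = Zk⁻¹ * ∫ y, γk y * f y := by
      rw [← integral_const_mul]
      refine integral_congr_ae (Filter.Eventually.of_forall fun y => ?_)
      ring
    have h3 := h1.trans h2
    rw [hinv] at h3
    rw [h3, ← mul_assoc, mul_inv_cancel₀ hZk_pos.ne', one_mul]
  -- main computation
  calc ∫ x, G x * f (T x) ∂πkm
      = ∫ x, (γkm x / Zkm) * (G x * f (T x)) := by
        rw [hπkm]
        exact hwd _ (hγkm_meas.div_const Zkm)
          (fun x => div_nonneg (hγkm_pos x).le hZkm_pos.le) _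
    _ = ∫ x, Zkm⁻¹ * (|(fderiv ℝ T x).det| * (γk (T x) * f (T x))) := by
        refine integral_congr_ae (Filter.Eventually.of_forall fun x => ?_)
        simp only [hG]
        have hx := (hγkm_pos x).ne'
        field_simp
    _ = Zkm⁻¹ * ∫ x, |(fderiv ℝ T x).det| * (γk (T x) * f (T x)) := integral_const_mul _ _
    _ = Zkm⁻¹ * ∫ y, γk y * f y := by rw [← hCoV fun y => γk y * f y]
    _ = Zkm⁻¹ * (Zk * ∫ y, h y ∂πk) := by rw [hfk]
    _ = (Zk / Zkm) * ∫ y, h y ∂πk := by ring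
end

section
/- Define measures μ_0, μ_1, …, μ_K on ℝ^M recursively by μ_0 = vol.withDensity γ_0 and μ_k = ((μ_{k-1}.withDensity G_k).map T_k).bind 𝒦_k for 1 ≤ k ≤ K. Then μ_k = vol.withDensity γ_k for every k. In particular the total mass satisfies μ_K(ℝ^M) = Z_K, i.e. the annealed-importance-sampling-with-flows weight w_K(x_{0:K-1}) = ∏_{k=1}^K G_k(x_{k-1}) is an unbiased estimator of the normalizing constant Z_K under the forward generating process. -/
open MeasureTheory ProbabilityTheory

lemma my_bind_smul {α : Type*} [MeasurableSpace α] (c : ENNReal) (m : Measure α)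
    (κ : ProbabilityTheory.Kernel α α) :
    (c • m).bind (fun x => κ x) = c • m.bind (fun x => κ x) := by
  refine Measure.ext fun s hs => ?_
  rw [Measure.smul_apply, Measure.bind_apply hs (κ.measurable.aemeasurable),
    Measure.bind_apply hs (κ.measurable.aemeasurable), lintegral_smul_measure, smul_eq_mul]

/-- the marginal measures of the annealed-importance-sampling-with-flows
process, defined by `μ_0 = vol.withDensity γ_0` and
`μ_k = ((μ_{k-1}.withDensity G_k).map T_k).bind 𝒦_k`, satisfy
`μ_k = vol.withDensity γ_k` for all `k ≤ K`; in particular the total mass of `μ_K`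
is `Z_K`, i.e. the AIS-with-flows weight is an unbiased estimator of `Z_K`. -/
theorem craft_unbiased_normalizing_constant
    (M K : ℕ)
    (γ : ℕ → (Fin M → ℝ) → ℝ)
    (hγ_pos : ∀ k, k ≤ K → ∀ x, 0 < γ k x)
    (hγ_meas : ∀ k, k ≤ K → Measurable (γ k))
    (hγ_int : ∀ k, k ≤ K → Integrable (γ k))
    (Z : ℕ → ℝ)
    (hZ : ∀ k, k ≤ K → Z k = ∫ x, γ k x)
    (hZ0 : Z 0 = 1)
    (π : ℕ → Measure (Fin M → ℝ))
    (hπ : ∀ k, k ≤ K →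
      π k = volume.withDensity (fun x => ENNReal.ofReal (γ k x / Z k)))
    (T Tinv : ℕ → (Fin M → ℝ) → (Fin M → ℝ))
    (hT : ∀ k, 1 ≤ k → k ≤ K → ContDiff ℝ 1 (T k))
    (hTinv : ∀ k, 1 ≤ k → k ≤ K → ContDiff ℝ 1 (Tinv k))
    (hTleft : ∀ k, 1 ≤ k → k ≤ K → Function.LeftInverse (Tinv k) (T k))
    (hTright : ∀ k, 1 ≤ k → k ≤ K → Function.RightInverse (Tinv k) (T k))
    (G : ℕ → (Fin M → ℝ) → ℝ)
    (hG : ∀ k, 1 ≤ k → k ≤ K → ∀ x,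
      G k x = γ k (T k x) / γ (k - 1) x * |(fderiv ℝ (T k) x).det|)
    (𝒦 : ℕ → Kernel (Fin M → ℝ) (Fin M → ℝ))
    (h𝒦markov : ∀ k, IsMarkovKernel (𝒦 k))
    (h𝒦inv : ∀ k, 1 ≤ k → k ≤ K → (π k).bind (fun x => 𝒦 k x) = π k)
    (μ : ℕ → Measure (Fin M → ℝ))
    (hμ0 : μ 0 = volume.withDensity (fun x => ENNReal.ofReal (γ 0 x)))
    (hμ : ∀ k, 1 ≤ k → k ≤ K →
      μ k = (((μ (k - 1)).withDensity
                (fun x => ENNReal.ofReal (G k x))).map (T k)).bind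
              (fun x => 𝒦 k x)) :
    (∀ k, k ≤ K → μ k = volume.withDensity (fun x => ENNReal.ofReal (γ k x))) ∧
    μ K Set.univ = ENNReal.ofReal (Z K) := by
  -- positivity of Z
  have hZpos : ∀ k, k ≤ K → 0 < Z k := by
    intro k hk
    rw [hZ k hk]
    rw [integral_pos_iff_support_of_nonneg (fun x => (hγ_pos k hk x).le) (hγ_int k hk)]
    have : Function.support (γ k) = Set.univ := by
      ext x; simp [Function.mem_support, (hγ_pos k hk x).ne']
    rw [this]
    exact Measure.measure_univ_pos.mpr (NeZero.ne _)
  have main : ∀ k, k ≤ K → μ k = volume.withDensity (fun x => ENNReal.ofReal (γ k x)) := by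
    intro k
    induction k with
    | zero => intro _; exact hμ0
    | succ n ih =>
      intro hnK
      have hn1 : 1 ≤ n + 1 := Nat.le_add_left 1 n
      have hnK' : n ≤ K := Nat.le_of_succ_le hnK
      set k := n + 1 with hk
      have hkK : k ≤ K := hnK
      have hμn := ih hnK'
      have hTm : Measurable (T k) := (hT k hn1 hkK).continuous.measurable
      -- step A : pushforward
      have stepA : ((μ n).withDensity (fun x => ENNReal.ofReal (G k x))).map (T k)
          = volume.withDensity (fun x => ENNReal.ofReal (γ k x)) := by
        ext A hA
        rw [Measure.map_apply hTm hA, withDensity_apply _ (hTm hA),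
          withDensity_apply _ hA, hμn,
          setLIntegral_withDensity_eq_setLIntegral_mul_non_measurable _
            ((hγ_meas n hnK').ennreal_ofReal) _ (hTm hA)
            (Filter.Eventually.of_forall (fun x => ENNReal.ofReal_lt_top))]
        have himg : T k '' (T k ⁻¹' A) = A := by
          apply Set.image_preimage_eq_of_subset
          intro y _
          exact ⟨Tinv k y, hTright k hn1 hkK y⟩
        have := lintegral_image_eq_lintegral_abs_det_fderiv_mul (volume)
          (hTm hA) (f' := fderiv ℝ (T k))
          (fun x _ => (((hT k hn1 hkK).differentiable one_ne_zero) x).hasFDerivAt.hasFDerivWithinAt)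
          ((hTleft k hn1 hkK).injective.injOn)
          (fun y => ENNReal.ofReal (γ k y))
        rw [himg] at this
        rw [this]
        apply setLIntegral_congr_fun (hTm hA)
        intro x _
        have hγn : γ n x ≠ 0 := (hγ_pos n hnK' x).ne'
        have : γ n x * G k x = γ k (T k x) * |(fderiv ℝ (T k) x).det| := by
          rw [hG k hn1 hkK x]
          have : k - 1 = n := rfl
          rw [this]
          field_simp
        simp only [Pi.mul_apply]
        rw [← ENNReal.ofReal_mul (hγ_pos n hnK' x).le, this,
          ENNReal.ofReal_mul (hγ_pos k hkK (T k x)).le, mul_comm]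
      -- step B : invariance
      have hZk := hZpos k hkK
      have hν : volume.withDensity (fun x => ENNReal.ofReal (γ k x))
          = ENNReal.ofReal (Z k) • π k := by
        rw [hπ k hkK, ← withDensity_smul' (ENNReal.ofReal (Z k)) _ ENNReal.ofReal_ne_top]
        congr 1
        ext x
        simp only [Pi.smul_apply, smul_eq_mul]
        rw [div_eq_mul_inv, ENNReal.ofReal_mul (hγ_pos k hkK x).le,
          ENNReal.ofReal_inv_of_pos hZk]
        rw [← mul_assoc, mul_comm (ENNReal.ofReal (Z k)), mul_assoc,
          ENNReal.mul_inv_cancel (ENNReal.ofReal_pos.mpr hZk).ne' ENNReal.ofReal_ne_top, mul_one]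
      rw [hμ k hn1 hkK]
      show ((((μ n).withDensity _).map (T k)).bind _) = _
      rw [stepA, hν, my_bind_smul, h𝒦inv k hn1 hkK]
  refine ⟨main, ?_⟩
  rw [main K le_rfl, withDensity_apply _ MeasurableSet.univ, Measure.restrict_univ,
    ← ofReal_integral_eq_lintegral_ofReal (hγ_int K le_rfl)
      (Filter.Eventually.of_forall (fun x => (hγ_pos K le_rfl x).le)), ← hZ K le_rfl]
end

section
/- Assume D is integrable with respect to π_{k-1}. Then the Kullback–Leibler divergence between the pushforward of π_{k-1} by T and π_k satisfies KL(T_#π_{k-1} ‖ π_k) = ∫ D dπ_{k-1} + log(Z_k / Z_{k-1}). -/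
open MeasureTheory Classical

/-- Kullback–Leibler divergence `∫ log (dμ/dν) dμ`, taken to be `+∞` when `μ` is not
absolutely continuous with respect to `ν` or the log density is not integrable. -/

noncomputable def KL {α : Type*} [MeasurableSpace α] (μ ν : Measure α) : EReal :=
  if μ ≪ ν ∧ Integrable (fun x => Real.log ((μ.rnDeriv ν x).toReal)) μ
  then ((∫ x, Real.log ((μ.rnDeriv ν x).toReal) ∂μ : ℝ) : EReal)
  else ⊤

lemma craft_Zpos {M : ℕ} {γ : (Fin M → ℝ) → ℝ} (hpos : ∀ x, 0 < γ x)
    (hint : Integrable γ) : 0 < ∫ x, γ x := by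
  rw [integral_pos_iff_support_of_nonneg (fun x => (hpos x).le) hint]
  have : Function.support γ = Set.univ := by
    ext x; simp [Function.support, (hpos x).ne']
  rw [this]
  exact isOpen_univ.measure_pos volume Set.univ_nonempty

lemma craft_prob {M : ℕ} {γ : (Fin M → ℝ) → ℝ} (hpos : ∀ x, 0 < γ x)
    (hint : Integrable γ) {Z : ℝ} (hZ : Z = ∫ x, γ x) :
    IsProbabilityMeasure (volume.withDensity (fun x => ENNReal.ofReal (γ x / Z))) := by
  have hZpos : 0 < Z := hZ ▸ craft_Zpos hpos hint
  constructor
  rw [withDensity_apply _ MeasurableSet.univ, Measure.restrict_univ,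
    ← ofReal_integral_eq_lintegral_ofReal (hint.div_const Z)
      (Filter.Eventually.of_forall fun x => div_nonneg (hpos x).le hZpos.le)]
  rw [integral_div, ← hZ, div_self hZpos.ne']
  simp

lemma craft_map_withDensity {M : ℕ} {T Tinv : (Fin M → ℝ) → (Fin M → ℝ)}
    (hT : ContDiff ℝ 1 T) (hTinv : ContDiff ℝ 1 Tinv)
    (hTleft : Function.LeftInverse Tinv T)
    (hTright : Function.RightInverse Tinv T)
    (f : (Fin M → ℝ) → ENNReal) :
    (volume.withDensity f).map T
      = volume.withDensity
          (fun y => ENNReal.ofReal |(fderiv ℝ Tinv y).det| * f (Tinv y)) := by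
  ext s hs
  rw [Measure.map_apply hT.continuous.measurable hs,
    withDensity_apply _ (hT.continuous.measurable hs), withDensity_apply _ hs]
  have himg : Tinv '' s = T ⁻¹' s := by
    ext y
    constructor
    · rintro ⟨z, hz, rfl⟩
      simpa [hTright z] using hz
    · intro hy
      exact ⟨T y, hy, hTleft y⟩
  rw [← himg]
  exact lintegral_image_eq_lintegral_abs_det_fderiv_mul volume hs
    (fun x _ =>
      ((hTinv.differentiable one_ne_zero x).hasFDerivAt).hasFDerivWithinAt)
    hTright.injective.injOn f

/-- `KL(T_#π_{k-1} ‖ π_k) = ∫ D dπ_{k-1} + log (Z_k / Z_{k-1})`. -/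
theorem craft_kl_decomposition
    (M : ℕ)
    (γkm γk : (Fin M → ℝ) → ℝ)
    (hγkm_pos : ∀ x, 0 < γkm x) (hγk_pos : ∀ x, 0 < γk x)
    (hγkm_meas : Measurable γkm) (hγk_meas : Measurable γk)
    (hγkm_int : Integrable γkm) (hγk_int : Integrable γk)
    (Zkm Zk : ℝ)
    (hZkm : Zkm = ∫ x, γkm x) (hZk : Zk = ∫ x, γk x)
    (πkm πk : Measure (Fin M → ℝ))
    (hπkm : πkm = volume.withDensity (fun x => ENNReal.ofReal (γkm x / Zkm)))
    (hπk : πk = volume.withDensity (fun x => ENNReal.ofReal (γk x / Zk)))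
    (T Tinv : (Fin M → ℝ) → (Fin M → ℝ))
    (hT : ContDiff ℝ 1 T) (hTinv : ContDiff ℝ 1 Tinv)
    (hTleft : Function.LeftInverse Tinv T)
    (hTright : Function.RightInverse Tinv T)
    (D : (Fin M → ℝ) → ℝ)
    (hD : ∀ x, D x = Real.log (γkm x / γk (T x)) - Real.log |(fderiv ℝ T x).det|)
    (hD_int : Integrable D πkm) :
    KL (πkm.map T) πk = ((∫ x, D x ∂πkm + Real.log (Zk / Zkm) : ℝ) : EReal) := by
  have hZkm_pos : 0 < Zkm := hZkm ▸ craft_Zpos hγkm_pos hγkm_int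
  have hZk_pos : 0 < Zk := hZk ▸ craft_Zpos hγk_pos hγk_int
  haveI hPkm : IsProbabilityMeasure πkm := by
    rw [hπkm]; exact craft_prob hγkm_pos hγkm_int hZkm
  haveI hPk : IsProbabilityMeasure πk := by
    rw [hπk]; exact craft_prob hγk_pos hγk_int hZk
  -- determinant identities
  have h_det : ∀ x, (fderiv ℝ Tinv (T x)).det * (fderiv ℝ T x).det = 1 := by
    intro x
    have h1 : HasFDerivAt (Tinv ∘ T) ((fderiv ℝ Tinv (T x)).comp (fderiv ℝ T x)) x :=
      ((hTinv.differentiable one_ne_zero (T x)).hasFDerivAt).comp x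
        ((hT.differentiable one_ne_zero x).hasFDerivAt)
    have h2 : Tinv ∘ T = id := funext hTleft
    rw [h2] at h1
    have h4 := h1.unique (hasFDerivAt_id x)
    have := congrArg ContinuousLinearMap.det h4
    simpa [ContinuousLinearMap.det, ContinuousLinearMap.coe_comp, LinearMap.det_comp] using this
  have h_det' : ∀ y, (fderiv ℝ Tinv y).det * (fderiv ℝ T (Tinv y)).det = 1 := by
    intro y
    have := h_det (Tinv y)
    rwa [hTright y] at this
  obtain ⟨ρ, hρdef⟩ : ∃ ρ' : (Fin M → ℝ) → ℝ,
      ρ' = fun y => |(fderiv ℝ Tinv y).det| * (γkm (Tinv y) / Zkm) * Zk / γk y := ⟨_, rfl⟩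
  have hρ_pos : ∀ y, 0 < ρ y := by
    intro y
    rw [hρdef]
    have h1 : 0 < |(fderiv ℝ Tinv y).det| :=
      abs_pos.mpr (left_ne_zero_of_mul_eq_one (h_det' y))
    exact div_pos (mul_pos (mul_pos h1 (div_pos (hγkm_pos _) hZkm_pos)) hZk_pos) (hγk_pos y)
  have hρ_meas : Measurable ρ := by
    rw [hρdef]
    have h1 : Measurable fun y => |(fderiv ℝ Tinv y).det| :=
      (continuous_abs.comp (ContinuousLinearMap.continuous_det.comp
        (hTinv.continuous_fderiv one_ne_zero))).measurable
    exact ((h1.mul ((hγkm_meas.comp hTinv.continuous.measurable).div_const Zkm)).mul_const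
      Zk).div hγk_meas
  have hmap : πkm.map T = πk.withDensity (fun y => ENNReal.ofReal (ρ y)) := by
    have key : (fun y => ENNReal.ofReal |(fderiv ℝ Tinv y).det|
          * ENNReal.ofReal (γkm (Tinv y) / Zkm))
        = (fun y => ENNReal.ofReal (γk y / Zk)) * (fun y => ENNReal.ofReal (ρ y)) := by
      funext y
      simp only [Pi.mul_apply]
      rw [← ENNReal.ofReal_mul (abs_nonneg _),
        ← ENNReal.ofReal_mul (div_nonneg (hγk_pos y).le hZk_pos.le)]
      congr 1
      rw [hρdef]
      have h1 : γk y ≠ 0 := (hγk_pos y).ne'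
      have h2 : Zk ≠ 0 := hZk_pos.ne'
      have h3 : Zkm ≠ 0 := hZkm_pos.ne'
      field_simp
    rw [hπkm, craft_map_withDensity hT hTinv hTleft hTright, key,
      withDensity_mul _ ((hγk_meas.div_const Zk).ennreal_ofReal) (hρ_meas.ennreal_ofReal),
      ← hπk]
  have hrn : (πkm.map T).rnDeriv πk =ᵐ[πk] fun y => ENNReal.ofReal (ρ y) := by
    rw [hmap]; exact Measure.rnDeriv_withDensity πk hρ_meas.ennreal_ofReal
  have hac : πkm.map T ≪ πk := hmap ▸ withDensity_absolutelyContinuous _ _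
  have hrn' : (πkm.map T).rnDeriv πk =ᵐ[πkm.map T] fun y => ENNReal.ofReal (ρ y) :=
    hrn.filter_mono hac.ae_le
  have hlog_eq : (fun y => Real.log (((πkm.map T).rnDeriv πk y).toReal))
      =ᵐ[πkm.map T] fun y => Real.log (ρ y) := by
    filter_upwards [hrn'] with y hy
    rw [hy, ENNReal.toReal_ofReal (hρ_pos y).le]
  have hcomp : ∀ x, Real.log (ρ (T x)) = D x + Real.log (Zk / Zkm) := by
    intro x
    have hdT : (fderiv ℝ T x).det ≠ 0 := right_ne_zero_of_mul_eq_one (h_det x)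
    have habs : |(fderiv ℝ Tinv (T x)).det| = |(fderiv ℝ T x).det|⁻¹ := by
      rw [← abs_inv]
      congr 1
      exact eq_inv_of_mul_eq_one_left (h_det x)
    have hreq : ρ (T x) = |(fderiv ℝ T x).det|⁻¹ * (γkm x / Zkm) * Zk / γk (T x) := by
      rw [hρdef]
      simp only [hTleft x, habs]
    have e1 : |(fderiv ℝ T x).det|⁻¹ ≠ 0 := inv_ne_zero (abs_ne_zero.mpr hdT)
    have e2 : γkm x / Zkm ≠ 0 := (div_pos (hγkm_pos x) hZkm_pos).ne'
    rw [hreq, Real.log_div (mul_ne_zero (mul_ne_zero e1 e2) hZk_pos.ne') (hγk_pos (T x)).ne',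
      Real.log_mul (mul_ne_zero e1 e2) hZk_pos.ne', Real.log_mul e1 e2, Real.log_inv,
      Real.log_div (hγkm_pos x).ne' hZkm_pos.ne', hD x,
      Real.log_div (hγkm_pos x).ne' (hγk_pos (T x)).ne',
      Real.log_div hZk_pos.ne' hZkm_pos.ne']
    ring
  have hint_comp : Integrable (fun x => Real.log (ρ (T x))) πkm := by
    have heq : (fun x => Real.log (ρ (T x))) = fun x => D x + Real.log (Zk / Zkm) :=
      funext hcomp
    rw [heq]
    exact hD_int.add (integrable_const _)
  have hlogρ_asm : AEStronglyMeasurable (fun y => Real.log (ρ y)) (πkm.map T) :=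
    (Real.measurable_log.comp hρ_meas).aestronglyMeasurable
  have hint_map : Integrable (fun y => Real.log (ρ y)) (πkm.map T) :=
    (integrable_map_measure hlogρ_asm hT.continuous.measurable.aemeasurable).mpr hint_comp
  have hint_rn : Integrable (fun y => Real.log (((πkm.map T).rnDeriv πk y).toReal))
      (πkm.map T) := hint_map.congr hlog_eq.symm
  simp only [KL]
  rw [if_pos ⟨hac, hint_rn⟩]
  congr 1
  rw [integral_congr_ae hlog_eq,
    integral_map hT.continuous.measurable.aemeasurable hlogρ_asm]
  have : ∫ x, Real.log (ρ (T x)) ∂πkm = ∫ x, (D x + Real.log (Zk / Zkm)) ∂πkm := by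
    exact integral_congr_ae (Filter.Eventually.of_forall hcomp)
  rw [this, integral_add hD_int (integrable_const _), integral_const, probReal_univ]
  simp
end

section
/- Assume each D_k is integrable with respect to π_{k-1}. Then log Z_K ≥ −∑_{k=1}^K ∫ D_k dπ_{k-1}, i.e. the negated CRAFT training objective is a lower bound on the log-normalizing constant of the target. -/
open MeasureTheory

/-- Jensen's inequality for the logarithm: for a probability measure `μ` and a
positive integrable function `g` with integrable logarithm,
`∫ log (g x) ∂μ ≤ log (∫ g ∂μ)`. -/
lemma craft_log_jensen {α : Type*} [MeasurableSpace α] (μ : Measure α)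
    [IsProbabilityMeasure μ]
    (g : α → ℝ) (hg_pos : ∀ x, 0 < g x) (hg_int : Integrable g μ)
    (hlog_int : Integrable (fun x => Real.log (g x)) μ) :
    ∫ x, Real.log (g x) ∂μ ≤ Real.log (∫ x, g x ∂μ) := by
  set I := ∫ x, g x ∂μ with hI
  have hIpos : 0 < I := by
    rw [hI, integral_pos_iff_support_of_nonneg (fun x => (hg_pos x).le) hg_int]
    have hsupp : Function.support g = Set.univ :=
      Set.eq_univ_of_forall fun x => (hg_pos x).ne'
    rw [hsupp]
    simp
  have key : ∀ x, Real.log (g x) ≤ Real.log I + (g x / I - 1) := by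
    intro x
    have h := Real.log_le_sub_one_of_pos (div_pos (hg_pos x) hIpos)
    rw [Real.log_div (hg_pos x).ne' hIpos.ne'] at h
    linarith
  have hRHS_int : Integrable (fun x => Real.log I + (g x / I - 1)) μ := by
    exact (integrable_const _).add ((hg_int.div_const I).sub (integrable_const 1))
  have h2 : ∫ x, Real.log (g x) ∂μ ≤ ∫ x, (Real.log I + (g x / I - 1)) ∂μ :=
    integral_mono hlog_int hRHS_int key
  have h3 : ∫ x, (Real.log I + (g x / I - 1)) ∂μ = Real.log I := by
    have heq : (fun x => Real.log I + (g x / I - 1))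
        = fun x => (Real.log I - 1) + g x * I⁻¹ := by
      funext x; rw [div_eq_mul_inv]; ring
    rw [heq, integral_add (integrable_const _) (hg_int.mul_const I⁻¹),
      integral_const, integral_mul_const, ← hI, mul_inv_cancel₀ hIpos.ne']
    simp
  linarith [h2, h3.le]

/-- Telescoping sum over `Icc 1 K`. -/
lemma craft_telescope (f : ℕ → ℝ) (K : ℕ) :
    ∑ k ∈ Finset.Icc 1 K, (f k - f (k - 1)) = f K - f 0 := by
  induction K with
  | zero => simp
  | succ n ih =>
      rw [Finset.sum_Icc_succ_top (Nat.succ_le_succ (Nat.zero_le n)), ih]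
      simp

/-- the negated CRAFT training objective lower bounds the
log-normalizing constant: `log Z_K ≥ −∑_{k=1}^K ∫ D_k dπ_{k-1}`. -/
theorem craft_objective_lower_bounds_log_Z
    (M K : ℕ)
    (γ : ℕ → (Fin M → ℝ) → ℝ)
    (hγ_pos : ∀ k, k ≤ K → ∀ x, 0 < γ k x)
    (hγ_meas : ∀ k, k ≤ K → Measurable (γ k))
    (hγ_int : ∀ k, k ≤ K → Integrable (γ k))
    (Z : ℕ → ℝ)
    (hZ : ∀ k, k ≤ K → Z k = ∫ x, γ k x)
    (hZ0 : Z 0 = 1)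
    (π : ℕ → Measure (Fin M → ℝ))
    (hπ : ∀ k, k ≤ K →
      π k = volume.withDensity (fun x => ENNReal.ofReal (γ k x / Z k)))
    (T Tinv : ℕ → (Fin M → ℝ) → (Fin M → ℝ))
    (hT : ∀ k, 1 ≤ k → k ≤ K → ContDiff ℝ 1 (T k))
    (hTinv : ∀ k, 1 ≤ k → k ≤ K → ContDiff ℝ 1 (Tinv k))
    (hTleft : ∀ k, 1 ≤ k → k ≤ K → Function.LeftInverse (Tinv k) (T k))
    (hTright : ∀ k, 1 ≤ k → k ≤ K → Function.RightInverse (Tinv k) (T k))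
    (D : ℕ → (Fin M → ℝ) → ℝ)
    (hD : ∀ k, 1 ≤ k → k ≤ K → ∀ x,
      D k x = Real.log (γ (k - 1) x / γ k (T k x))
                - Real.log |(fderiv ℝ (T k) x).det|)
    (hD_int : ∀ k, 1 ≤ k → k ≤ K → Integrable (D k) (π (k - 1))) :
    Real.log (Z K) ≥ -∑ k ∈ Finset.Icc 1 K, ∫ x, D k x ∂(π (k - 1)) := by
  -- positivity of the normalizing constants
  have hZpos : ∀ k, k ≤ K → 0 < Z k := by
    intro k hk
    rw [hZ k hk,
      integral_pos_iff_support_of_nonneg (fun x => (hγ_pos k hk x).le) (hγ_int k hk)]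
    have hsupp : Function.support (γ k) = Set.univ :=
      Set.eq_univ_of_forall fun x => (hγ_pos k hk x).ne'
    rw [hsupp]
    exact MeasureTheory.Measure.measure_univ_pos.mpr (NeZero.ne _)
  -- each π j (j ≤ K) is a probability measure
  have hπ_prob : ∀ j, j ≤ K → IsProbabilityMeasure (π j) := by
    intro j hj
    constructor
    rw [hπ j hj, withDensity_apply _ MeasurableSet.univ, Measure.restrict_univ,
      ← ofReal_integral_eq_lintegral_ofReal ((hγ_int j hj).div_const (Z j))
        (Filter.Eventually.of_forall fun x => (div_pos (hγ_pos j hj x) (hZpos j hj)).le)]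
    rw [integral_div, ← hZ j hj, div_self (hZpos j hj).ne']
    simp
  -- key step: per-transition bound
  have step : ∀ k ∈ Finset.Icc 1 K,
      -∫ x, D k x ∂(π (k - 1)) ≤ Real.log (Z k) - Real.log (Z (k - 1)) := by
    intro k hk
    rw [Finset.mem_Icc] at hk
    obtain ⟨hk1, hkK⟩ := hk
    have hk1K : k - 1 ≤ K := le_trans (Nat.sub_le k 1) hkK
    have hdiffT : Differentiable ℝ (T k) := (hT k hk1 hkK).differentiable one_ne_zero
    have hdiffTinv : Differentiable ℝ (Tinv k) := (hTinv k hk1 hkK).differentiable one_ne_zero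
    -- the derivative has nonzero determinant
    have hdet : ∀ x, (fderiv ℝ (T k) x).det ≠ 0 := by
      intro x
      have h1 : HasFDerivAt (Tinv k ∘ T k)
          ((fderiv ℝ (Tinv k) (T k x)).comp (fderiv ℝ (T k) x)) x :=
        (hdiffTinv (T k x)).hasFDerivAt.comp x (hdiffT x).hasFDerivAt
      have h2 : Tinv k ∘ T k = id := funext (hTleft k hk1 hkK)
      rw [h2] at h1
      have h3 : (fderiv ℝ (Tinv k) (T k x)).comp (fderiv ℝ (T k) x)
          = ContinuousLinearMap.id ℝ (Fin M → ℝ) := h1.unique (hasFDerivAt_id x)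
      have h4 : (fderiv ℝ (Tinv k) (T k x)).det * (fderiv ℝ (T k) x).det = 1 := by
        have h5 := congrArg ContinuousLinearMap.det h3
        simp only [ContinuousLinearMap.det, ContinuousLinearMap.coe_comp,
          LinearMap.det_comp, ContinuousLinearMap.coe_id, LinearMap.det_id] at h5
        exact (LinearMap.det_comp _ _).symm.trans h5
      intro hc
      rw [hc, mul_zero] at h4
      exact one_ne_zero h4.symm
    have hdet_pos : ∀ x, 0 < |(fderiv ℝ (T k) x).det| := fun x => abs_pos.mpr (hdet x)
    -- change of variables : ∫ |det| • γ k ∘ T k = Z k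
    have hderivW : ∀ x ∈ (Set.univ : Set (Fin M → ℝ)),
        HasFDerivWithinAt (T k) (fderiv ℝ (T k) x) Set.univ x :=
      fun x _ => (hdiffT x).hasFDerivAt.hasFDerivWithinAt
    have hinj : Set.InjOn (T k) Set.univ := ((hTleft k hk1 hkK).injective).injOn
    have himg : T k '' Set.univ = Set.univ := by
      rw [Set.image_univ]
      exact (hTright k hk1 hkK).surjective.range_eq
    have hcov : ∫ x, |(fderiv ℝ (T k) x).det| * γ k (T k x) = Z k := by
      have := MeasureTheory.integral_image_eq_integral_abs_det_fderiv_smul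
        (volume : Measure (Fin M → ℝ)) MeasurableSet.univ hderivW hinj (γ k)
      rw [himg, Measure.restrict_univ] at this
      rw [hZ k hkK, this]
      simp [smul_eq_mul]
    have hcov_int : Integrable (fun x => |(fderiv ℝ (T k) x).det| * γ k (T k x)) := by
      have := (MeasureTheory.integrableOn_image_iff_integrableOn_abs_det_fderiv_smul
        (volume : Measure (Fin M → ℝ)) MeasurableSet.univ hderivW hinj (γ k)).mp
      rw [himg] at this
      have h := this ((integrableOn_univ).mpr (hγ_int k hkK))
      rw [integrableOn_univ] at h
      simpa [smul_eq_mul] using h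
    -- the ratio function
    set g : (Fin M → ℝ) → ℝ :=
      fun x => γ k (T k x) * |(fderiv ℝ (T k) x).det| / γ (k - 1) x with hg
    have hg_pos : ∀ x, 0 < g x := fun x =>
      div_pos (mul_pos (hγ_pos k hkK (T k x)) (hdet_pos x)) (hγ_pos (k-1) hk1K x)
    -- log g = - D k
    have hlogg : ∀ x, Real.log (g x) = -D k x := by
      intro x
      rw [hD k hk1 hkK x, hg]
      rw [Real.log_div (mul_pos (hγ_pos k hkK (T k x)) (hdet_pos x)).ne'
          (hγ_pos (k-1) hk1K x).ne',
        Real.log_mul (hγ_pos k hkK (T k x)).ne' (hdet_pos x).ne',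
        Real.log_div (hγ_pos (k-1) hk1K x).ne' (hγ_pos k hkK (T k x)).ne']
      ring
    -- density description of π (k-1)
    have hdens_meas : Measurable fun x => ENNReal.ofReal (γ (k-1) x / Z (k-1)) :=
      (((hγ_meas (k-1) hk1K).div_const _)).ennreal_ofReal
    have hdens_lt : ∀ᵐ x ∂(volume : Measure (Fin M → ℝ)),
        ENNReal.ofReal (γ (k-1) x / Z (k-1)) < ⊤ :=
      Filter.Eventually.of_forall fun x => ENNReal.ofReal_lt_top
    have htoReal : ∀ x, (ENNReal.ofReal (γ (k-1) x / Z (k-1))).toReal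
        = γ (k-1) x / Z (k-1) := fun x =>
      ENNReal.toReal_ofReal (div_pos (hγ_pos (k-1) hk1K x) (hZpos (k-1) hk1K)).le
    -- integrability of g with respect to π (k-1)
    have hg_int : Integrable g (π (k-1)) := by
      rw [hπ (k-1) hk1K, integrable_withDensity_iff hdens_meas hdens_lt]
      have heq : (fun x => g x * (ENNReal.ofReal (γ (k-1) x / Z (k-1))).toReal)
          = fun x => (|(fderiv ℝ (T k) x).det| * γ k (T k x)) / Z (k-1) := by
        funext x
        have hne := (hγ_pos (k-1) hk1K x).ne'
        rw [htoReal x, hg]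
        field_simp
      rw [heq]
      exact hcov_int.div_const _
    -- value of ∫ g dπ(k-1)
    have hg_integral : ∫ x, g x ∂(π (k-1)) = Z k / Z (k-1) := by
      rw [hπ (k-1) hk1K]
      have hof : (fun x => ENNReal.ofReal (γ (k-1) x / Z (k-1)))
          = fun x => ((γ (k-1) x / Z (k-1)).toNNReal : ENNReal) := by
        funext x; rfl
      rw [hof, integral_withDensity_eq_integral_smul
        ((hγ_meas (k-1) hk1K).div_const _).real_toNNReal g]
      have heq : (fun x => (γ (k-1) x / Z (k-1)).toNNReal • g x)
          = fun x => (|(fderiv ℝ (T k) x).det| * γ k (T k x)) / Z (k-1) := by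
        funext x
        have hne := (hγ_pos (k-1) hk1K x).ne'
        rw [NNReal.smul_def, Real.coe_toNNReal _
          (div_pos (hγ_pos (k-1) hk1K x) (hZpos (k-1) hk1K)).le]
        simp only [hg, smul_eq_mul]
        field_simp
      rw [heq, integral_div, hcov]
    -- integrability of log g
    have hlog_int : Integrable (fun x => Real.log (g x)) (π (k-1)) := by
      have : (fun x => Real.log (g x)) = fun x => -D k x := funext hlogg
      rw [this]
      exact (hD_int k hk1 hkK).neg
    haveI hprob : IsProbabilityMeasure (π (k-1)) := hπ_prob (k-1) hk1K
    have hjensen := craft_log_jensen (π (k-1)) g hg_pos hg_int hlog_int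
    rw [hg_integral] at hjensen
    have hlogs : ∫ x, Real.log (g x) ∂(π (k-1)) = -∫ x, D k x ∂(π (k-1)) := by
      rw [show (fun x => Real.log (g x)) = fun x => -D k x from funext hlogg,
        integral_neg]
    rw [hlogs, Real.log_div (hZpos k hkK).ne' (hZpos (k-1) hk1K).ne'] at hjensen
    exact hjensen
  -- sum up the per-transition bounds
  calc -∑ k ∈ Finset.Icc 1 K, ∫ x, D k x ∂(π (k - 1))
      = ∑ k ∈ Finset.Icc 1 K, -(∫ x, D k x ∂(π (k - 1))) := by
        rw [← Finset.sum_neg_distrib]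
    _ ≤ ∑ k ∈ Finset.Icc 1 K, (Real.log (Z k) - Real.log (Z (k - 1))) :=
        Finset.sum_le_sum step
    _ = Real.log (Z K) - Real.log (Z 0) := craft_telescope _ K
    _ = Real.log (Z K) := by rw [hZ0, Real.log_one, sub_zero]
end
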